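/- Let (x^k) ⊆ H be Fejér monotone with respect to a nonempty set C ⊆ H, let s be a positive integer, and suppose the subsequence (x^{ks})_k converges weakly to some z ∈ C and ‖x^{k+1} − x^k‖ → 0. Then the whole sequence (x^k) converges weakly to z. -/

import Mathlib

theorem fejer_subseq_weak_convergence
    {H : Type*} [NormedAddCommGroup H] [InnerProductSpace ℝ H]
    (x : ℕ → H) (C : Set H) (hCne : C.Nonempty)
    (s : ℕ) (hs : 0 < s)
    (hFejer : ∀ z ∈ C, ∀ k : ℕ, ‖x (k + 1) - z‖ ≤ ‖x k - z‖)
    (z : H) (hz : z ∈ C)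
    (hweak : ∀ y : H, Filter.Tendsto (fun k => (inner ℝ y (x (k * s)) : ℝ))
      Filter.atTop (nhds (inner ℝ y z)))
    (hdiff : Filter.Tendsto (fun k => ‖x (k + 1) - x k‖) Filter.atTop (nhds 0)) :
    ∀ y : H, Filter.Tendsto (fun k => (inner ℝ y (x k) : ℝ))
      Filter.atTop (nhds (inner ℝ y z)) := by
  have key : Filter.Tendsto (fun n => ‖x n - x (n / s * s)‖) Filter.atTop (nhds 0) := by
    rw [Metric.tendsto_atTop] at hdiff ⊢
    intro ε hε
    have hsR : (0 : ℝ) < (s : ℝ) := by exact_mod_cast hs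
    obtain ⟨N, hN⟩ := hdiff (ε / s) (by positivity)
    refine ⟨N + s, fun n hn => ?_⟩
    set m := n / s * s with hmdef
    have hdm := Nat.div_add_mod n s
    have hm' : m = s * (n / s) := by rw [hmdef, mul_comm]
    have hmod : n % s < s := Nat.mod_lt n hs
    have hmn : m ≤ n := by omega
    have hnm : n - m < s := by omega
    have hmN : N ≤ m := by omega
    have hbound : dist (x m) (x n) ≤ ∑ i ∈ Finset.Ico m n, dist (x i) (x (i + 1)) :=
      dist_le_Ico_sum_dist x hmn
    have hsum : ∑ i ∈ Finset.Ico m n, dist (x i) (x (i + 1))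
        ≤ (Finset.Ico m n).card • (ε / s) := by
      apply Finset.sum_le_card_nsmul
      intro i hi
      rw [Finset.mem_Ico] at hi
      have hiN : N ≤ i := le_trans hmN hi.1
      have := hN i hiN
      rw [Real.dist_eq, sub_zero, abs_norm] at this
      rw [dist_comm, dist_eq_norm]
      exact le_of_lt this
    have hcard : (Finset.Ico m n).card = n - m := Nat.card_Ico m n
    rw [Real.dist_eq, sub_zero, abs_norm]
    have h1 : ‖x n - x m‖ = dist (x m) (x n) := by
      rw [dist_eq_norm, norm_sub_rev]
    rw [h1]
    calc dist (x m) (x n) ≤ (Finset.Ico m n).card • (ε / s) := le_trans hbound hsum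
      _ = ((n - m : ℕ) : ℝ) * (ε / s) := by rw [hcard, nsmul_eq_mul]
      _ < (s : ℝ) * (ε / s) := by
          apply mul_lt_mul_of_pos_right _ (by positivity)
          exact_mod_cast hnm
      _ = ε := by field_simp
  intro y
  have hdivtop : Filter.Tendsto (fun n : ℕ => n / s) Filter.atTop Filter.atTop := by
    apply Filter.tendsto_atTop_atTop.2
    intro b
    exact ⟨b * s, fun n hn => (Nat.le_div_iff_mul_le hs).2 hn⟩
  have h1 : Filter.Tendsto (fun n => (inner ℝ y (x (n / s * s)) : ℝ))
      Filter.atTop (nhds (inner ℝ y z)) := (hweak y).comp hdivtop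
  have h2 : Filter.Tendsto (fun n => (inner ℝ y (x n - x (n / s * s)) : ℝ))
      Filter.atTop (nhds 0) := by
    refine squeeze_zero_norm (fun n => norm_inner_le_norm y _) ?_
    simpa using key.const_mul ‖y‖
  have := h1.add h2
  rw [add_zero] at this
  convert this using 2 with n
  rw [← inner_add_right]
  congr 1
  abel
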